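/- Let f : ℝ → ℝ and u : ℝ → ℝ be of class C⁴, fix x ∈ ℝ and κ ∈ ℝ. Then the central flux balance of the κ-scheme has the pointwise expansion (1/(2h))·(f(uL(u,h)) + f(uR(u,h)) − f(uL⁻(u,h)) − f(uR⁻(u,h))) = (f∘u)'(x) + (1/24)·( f'''(u(x))·u'(x)³ + 6κ·f''(u(x))·u'(x)·u''(x) + 2·(3κ−1)·f'(u(x))·u'''(x) )·h² + O(h³) as h → 0⁺. -/

import Mathlib

open Asymptotics Filter Set MeasureTheory

noncomputable def uL (κ x : ℝ) (v : ℝ → ℝ) (h : ℝ) : ℝ :=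
  (v x + v (x + h)) / 2 - ((1 - κ) / 4) * (v (x + h) - 2 * v x + v (x - h))

noncomputable def uR (κ x : ℝ) (v : ℝ → ℝ) (h : ℝ) : ℝ :=
  (v (x + h) + v x) / 2 - ((1 - κ) / 4) * (v (x + 2 * h) - 2 * v (x + h) + v x)

/-- Left-face interpolated value from the left: same formula with `x` replaced by `x - h`. -/
noncomputable def uLm (κ x : ℝ) (v : ℝ → ℝ) (h : ℝ) : ℝ := uL κ (x - h) v h

/-- Left-face interpolated value from the right: same formula with `x` replaced by `x - h`. -/
noncomputable def uRm (κ x : ℝ) (v : ℝ → ℝ) (h : ℝ) : ℝ := uR κ (x - h) v h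


lemma dstep {g : ℝ → ℝ} (hg : Differentiable ℝ g) (h0 : g 0 = 0) {k : ℕ}
    (hO : deriv g =O[nhds 0] fun t : ℝ => t ^ k) :
    g =O[nhds 0] fun t : ℝ => t ^ (k + 1) := by
  rw [isBigO_iff] at hO ⊢
  obtain ⟨c, hc⟩ := hO
  rw [Metric.eventually_nhds_iff] at hc
  obtain ⟨ε, hε, hball⟩ := hc
  refine ⟨|c|, Metric.eventually_nhds_iff.2 ⟨ε, hε, fun {h} hh => ?_⟩⟩
  have habs : ∀ t ∈ Set.uIcc (0:ℝ) h, |t| ≤ |h| := by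
    intro t ht
    rcases Set.mem_uIcc.1 ht with ⟨h1, h2⟩ | ⟨h1, h2⟩ <;>
      rw [abs_le] <;> constructor <;> nlinarith [le_abs_self h, neg_abs_le h]
  have key : ‖g h - g 0‖ ≤ (|c| * |h| ^ k) * ‖h - 0‖ := by
    apply Convex.norm_image_sub_le_of_norm_deriv_le (s := Set.uIcc (0:ℝ) h)
      (fun t _ => hg t) _ (convex_uIcc 0 h) Set.left_mem_uIcc
      Set.right_mem_uIcc
    intro t ht
    have hd : dist t 0 < ε := by
      rw [Real.dist_eq, sub_zero]
      calc |t| ≤ |h| := habs t ht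
        _ < ε := by rwa [Real.dist_eq, sub_zero] at hh
    calc ‖deriv g t‖ ≤ c * ‖t ^ k‖ := hball hd
      _ ≤ |c| * |t| ^ k := by
          rw [norm_pow, Real.norm_eq_abs]
          exact mul_le_mul_of_nonneg_right (le_abs_self c) (by positivity)
      _ ≤ |c| * |h| ^ k := by
          exact mul_le_mul_of_nonneg_left (pow_le_pow_left₀ (abs_nonneg t) (habs t ht) k)
            (abs_nonneg c)
  rw [h0, sub_zero, sub_zero] at key
  calc ‖g h‖ ≤ |c| * |h| ^ k * ‖h‖ := key
    _ = |c| * ‖h ^ (k+1)‖ := by rw [norm_pow, Real.norm_eq_abs, pow_succ]; ring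

lemma taylor4 {φ : ℝ → ℝ} (hφ : ContDiff ℝ 4 φ) :
    (fun t : ℝ => φ t - (φ 0 + iteratedDeriv 1 φ 0 * t + iteratedDeriv 2 φ 0 * t ^ 2 / 2
      + iteratedDeriv 3 φ 0 * t ^ 3 / 6)) =O[nhds 0] fun t : ℝ => t ^ 4 := by
  have hφ4 : ContDiff ℝ ((1 + 3 : ℕ) : WithTop ℕ∞) φ := by exact_mod_cast hφ
  have h3 : ContDiff ℝ 1 (deriv (deriv (deriv φ))) := by
    have := ContDiff.iterate_deriv' 1 3 hφ4
    simpa [Function.iterate_succ_apply', Function.comp] using this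
  have hφ1 : ContDiff ℝ ((3 + 1 : ℕ) : WithTop ℕ∞) φ := by exact_mod_cast hφ
  have h1 : ContDiff ℝ 3 (deriv φ) := (contDiff_succ_iff_deriv.mp hφ1).2.2
  have h1' : ContDiff ℝ ((2 + 1 : ℕ) : WithTop ℕ∞) (deriv φ) := by exact_mod_cast h1
  have h2 : ContDiff ℝ 2 (deriv (deriv φ)) := (contDiff_succ_iff_deriv.mp h1').2.2
  have d0 : Differentiable ℝ φ := hφ.differentiable (by norm_num)
  have d1 : Differentiable ℝ (deriv φ) := h1.differentiable (by norm_num)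
  have d2 : Differentiable ℝ (deriv (deriv φ)) := h2.differentiable (by norm_num)
  have d3 : Differentiable ℝ (deriv (deriv (deriv φ))) := h3.differentiable (by norm_num)
  set a0 := φ 0
  set a1 := deriv φ 0 with ha1
  set a2 := deriv (deriv φ) 0 with ha2
  set a3 := deriv (deriv (deriv φ)) 0 with ha3
  -- level 3
  have hO3 : (fun t : ℝ => deriv (deriv (deriv φ)) t - a3) =O[nhds 0] fun t : ℝ => t ^ 1 := by
    simpa using (d3 0).isBigO_sub
  -- level 2
  have hO2 : (fun t : ℝ => deriv (deriv φ) t - (a2 + a3 * t)) =O[nhds 0]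
      fun t : ℝ => t ^ 2 := by
    have hder : ∀ t : ℝ, HasDerivAt (fun t : ℝ => deriv (deriv φ) t - (a2 + a3 * t))
        (deriv (deriv (deriv φ)) t - a3) t := by
      intro t
      have hp : HasDerivAt (fun t : ℝ => a2 + a3 * t) a3 t := by
        simpa using ((hasDerivAt_id t).const_mul a3).const_add a2
      exact ((d2 t).hasDerivAt).sub hp
    refine dstep (fun t => (hder t).differentiableAt) (by simp [ha2]) ?_
    have : deriv (fun t : ℝ => deriv (deriv φ) t - (a2 + a3 * t))
        = fun t => deriv (deriv (deriv φ)) t - a3 := funext fun t => (hder t).deriv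
    rw [this]; exact hO3
  -- level 1
  have hO1 : (fun t : ℝ => deriv φ t - (a1 + a2 * t + a3 * t ^ 2 / 2)) =O[nhds 0]
      fun t : ℝ => t ^ 3 := by
    have hder : ∀ t : ℝ, HasDerivAt (fun t : ℝ => deriv φ t - (a1 + a2 * t + a3 * t ^ 2 / 2))
        (deriv (deriv φ) t - (a2 + a3 * t)) t := by
      intro t
      have hp : HasDerivAt (fun t : ℝ => a1 + a2 * t + a3 * t ^ 2 / 2) (a2 + a3 * t) t := by
        have := (((hasDerivAt_id t).const_mul a2).const_add a1).add
          (((hasDerivAt_pow 2 t).const_mul a3).div_const 2)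
        exact this.congr_deriv (by push_cast; ring)
      exact ((d1 t).hasDerivAt).sub hp
    refine dstep (fun t => (hder t).differentiableAt) (by simp [ha1]) ?_
    have : deriv (fun t : ℝ => deriv φ t - (a1 + a2 * t + a3 * t ^ 2 / 2))
        = fun t => deriv (deriv φ) t - (a2 + a3 * t) := funext fun t => (hder t).deriv
    rw [this]; exact hO2
  -- level 0
  have hO0 : (fun t : ℝ => φ t - (a0 + a1 * t + a2 * t ^ 2 / 2 + a3 * t ^ 3 / 6)) =O[nhds 0]
      fun t : ℝ => t ^ 4 := by
    have hder : ∀ t : ℝ, HasDerivAt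
        (fun t : ℝ => φ t - (a0 + a1 * t + a2 * t ^ 2 / 2 + a3 * t ^ 3 / 6))
        (deriv φ t - (a1 + a2 * t + a3 * t ^ 2 / 2)) t := by
      intro t
      have hp : HasDerivAt (fun t : ℝ => a0 + a1 * t + a2 * t ^ 2 / 2 + a3 * t ^ 3 / 6)
          (a1 + a2 * t + a3 * t ^ 2 / 2) t := by
        have := ((((hasDerivAt_id t).const_mul a1).const_add a0).add
          (((hasDerivAt_pow 2 t).const_mul a2).div_const 2)).add
          (((hasDerivAt_pow 3 t).const_mul a3).div_const 6)
        exact this.congr_deriv (by push_cast; ring)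
      exact ((d0 t).hasDerivAt).sub hp
    refine dstep (fun t => (hder t).differentiableAt) (by simp [a0]) ?_
    have : deriv (fun t : ℝ => φ t - (a0 + a1 * t + a2 * t ^ 2 / 2 + a3 * t ^ 3 / 6))
        = fun t => deriv φ t - (a1 + a2 * t + a3 * t ^ 2 / 2) := funext fun t => (hder t).deriv
    rw [this]; exact hO1
  have hiter : iteratedDeriv 1 φ 0 = a1 ∧ iteratedDeriv 2 φ 0 = a2 ∧ iteratedDeriv 3 φ 0 = a3 := by
    refine ⟨?_, ?_, ?_⟩ <;> simp [iteratedDeriv_succ, iteratedDeriv_zero, ha1, ha2, ha3]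
  rw [hiter.1, hiter.2.1, hiter.2.2]
  exact hO0

lemma uTaylor {u : ℝ → ℝ} (hu : ContDiff ℝ 4 u) (x c : ℝ) :
    (fun h : ℝ => u (x + c * h) - (u x + (c * deriv u x * h
      + c ^ 2 * iteratedDeriv 2 u x * h ^ 2 / 2 + c ^ 3 * iteratedDeriv 3 u x * h ^ 3 / 6)))
      =O[nhds 0] fun h : ℝ => h ^ 4 := by
  have hg : ContDiff ℝ 4 (fun t => u (x + t)) := hu.comp (contDiff_const.add contDiff_id)
  have hφ : ContDiff ℝ 4 (fun h : ℝ => u (x + c * h)) :=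
    hu.comp (contDiff_const.add (contDiff_const.mul contDiff_id))
  have key : ∀ n : ℕ, (n : WithTop ℕ∞) ≤ 4 →
      iteratedDeriv n (fun h : ℝ => u (x + c * h)) 0 = c ^ n * iteratedDeriv n u x := by
    intro n hn
    have hgn : ContDiff ℝ n (fun t => u (x + t)) := hg.of_le hn
    have h1 : iteratedDeriv n (fun h : ℝ => u (x + c * h)) 0
        = c ^ n * iteratedDeriv n (fun t => u (x + t)) (c * 0) :=
      congrFun (iteratedDeriv_comp_const_mul hgn c) 0
    rw [h1, iteratedDeriv_comp_const_add n u x]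
    norm_num
  refine (taylor4 hφ).congr_left fun h => ?_
  rw [key 1 (by norm_num), key 2 (by norm_num), key 3 (by norm_num)]
  rw [show x + c * 0 = x by ring, iteratedDeriv_one]
  ring

lemma comp_step {f : ℝ → ℝ} (hf : ContDiff ℝ 4 f) {v S : ℝ → ℝ} {y : ℝ}
    (hv : (fun h => v h - (y + S h)) =O[nhds 0] fun h : ℝ => h ^ 4)
    (hSO : S =O[nhds 0] fun h : ℝ => h) :
    (fun h => f (v h) - (f y + deriv f y * S h + iteratedDeriv 2 f y * S h ^ 2 / 2
      + iteratedDeriv 3 f y * S h ^ 3 / 6)) =O[nhds 0] fun h : ℝ => h ^ 4 := by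
  have hψ : ContDiff ℝ 4 (fun t => f (y + t)) := hf.comp (contDiff_const.add contDiff_id)
  have hkey : ∀ n : ℕ, iteratedDeriv n (fun t => f (y + t)) 0 = iteratedDeriv n f y := by
    intro n; rw [iteratedDeriv_comp_const_add]; norm_num
  have hidt : Tendsto (fun h : ℝ => h) (nhds 0) (nhds (0 : ℝ)) := tendsto_id
  have hStend : Tendsto S (nhds 0) (nhds 0) := hSO.trans_tendsto hidt
  have tay := (taylor4 hψ).comp_tendsto hStend
  have hS4 : ((fun t : ℝ => t ^ 4) ∘ S) =O[nhds 0] fun h : ℝ => h ^ 4 := by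
    simpa [Function.comp_def] using hSO.pow 4
  have h2 : Tendsto (fun h => y + S h) (nhds 0) (nhds y) := by
    simpa using tendsto_const_nhds.add hStend
  have hvt : Tendsto v (nhds 0) (nhds y) := by
    have h1 : Tendsto (fun h => v h - (y + S h)) (nhds 0) (nhds 0) :=
      hv.trans_tendsto (by simpa using hidt.pow 4)
    simpa using h1.add h2
  obtain ⟨K, t, ht, hK⟩ :=
    ((hf.contDiffAt (x := y)).of_le (by norm_num)).exists_lipschitzOnWith
  have hev : ∀ᶠ h in nhds (0 : ℝ), ‖f (v h) - f (y + S h)‖ ≤ K * ‖v h - (y + S h)‖ := by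
    filter_upwards [hvt.eventually_mem ht, h2.eventually_mem ht] with h h1 h2'
    have := hK.dist_le_mul _ h1 _ h2'
    simpa [Real.dist_eq] using this
  have hlip : (fun h => f (v h) - f (y + S h)) =O[nhds 0] fun h => v h - (y + S h) :=
    IsBigO.of_bound K hev
  have part1 := hlip.trans hv
  refine ((part1.add (tay.trans hS4)).congr_left fun h => ?_)
  simp only [Function.comp_apply]
  rw [hkey 1, hkey 2, hkey 3, show y + (0:ℝ) = y by ring, iteratedDeriv_one]
  ring

noncomputable def Tc (D1 D2 D3 c h : ℝ) : ℝ :=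
  c * D1 * h + c ^ 2 * D2 * h ^ 2 / 2 + c ^ 3 * D3 * h ^ 3 / 6

noncomputable def faceS (q D1 D2 D3 c1 c2 c3 h : ℝ) : ℝ :=
  (1/2 + 2*q) * Tc D1 D2 D3 c1 h + (1/2 - q) * Tc D1 D2 D3 c2 h + (-q) * Tc D1 D2 D3 c3 h

lemma face_estimate {u : ℝ → ℝ} (hu : ContDiff ℝ 4 u) (x q c1 c2 c3 : ℝ) :
    (fun h : ℝ => ((1/2 + 2*q) * u (x + c1*h) + (1/2 - q) * u (x + c2*h) + (-q) * u (x + c3*h))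
      - (u x + faceS q (deriv u x) (iteratedDeriv 2 u x) (iteratedDeriv 3 u x) c1 c2 c3 h))
      =O[nhds 0] fun h : ℝ => h ^ 4 := by
  have := ((uTaylor hu x c1).const_mul_left (1/2 + 2*q)).add
    (((uTaylor hu x c2).const_mul_left (1/2 - q)).add ((uTaylor hu x c3).const_mul_left (-q)))
  refine this.congr_left fun h => ?_
  simp only [faceS, Tc]; ring

lemma faceS_isO (q D1 D2 D3 c1 c2 c3 : ℝ) :
    (fun h => faceS q D1 D2 D3 c1 c2 c3 h) =O[nhds 0] fun h : ℝ => h := by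
  have hdiff : DifferentiableAt ℝ (fun h => faceS q D1 D2 D3 c1 c2 c3 h) 0 := by
    simp only [faceS, Tc]; fun_prop
  have := hdiff.isBigO_sub
  have h0 : faceS q D1 D2 D3 c1 c2 c3 0 = 0 := by simp [faceS, Tc]
  simpa [h0] using this

theorem quick_flux_balance_pointwise_expansion (f u : ℝ → ℝ) (hf : ContDiff ℝ 4 f)
    (hu : ContDiff ℝ 4 u) (x κ : ℝ) :
    (fun h : ℝ =>
        (1 / (2 * h)) * (f (uL κ x u h) + f (uR κ x u h)
          - f (uLm κ x u h) - f (uRm κ x u h))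
        - (deriv (f ∘ u) x
           + (1 / 24) * (iteratedDeriv 3 f (u x) * (deriv u x) ^ 3
              + 6 * κ * iteratedDeriv 2 f (u x) * deriv u x * iteratedDeriv 2 u x
              + 2 * (3 * κ - 1) * deriv f (u x) * iteratedDeriv 3 u x) * h ^ 2))
      =O[nhdsWithin 0 (Set.Ioi 0)] fun h : ℝ => h ^ 3 := by
  set q : ℝ := (1 - κ) / 4 with hq
  set D1 := deriv u x with hD1
  set D2 := iteratedDeriv 2 u x with hD2
  set D3 := iteratedDeriv 3 u x with hD3
  set y := u x with hy
  set E1 := deriv f y with hE1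
  set E2 := iteratedDeriv 2 f y with hE2
  set E3 := iteratedDeriv 3 f y with hE3
  set SL : ℝ → ℝ := fun h => faceS q D1 D2 D3 0 1 (-1) h with hSL
  set SR : ℝ → ℝ := fun h => faceS q D1 D2 D3 1 0 2 h with hSR
  set SLm : ℝ → ℝ := fun h => faceS q D1 D2 D3 (-1) 0 (-2) h with hSLm
  set SRm : ℝ → ℝ := fun h => faceS q D1 D2 D3 0 (-1) 1 h with hSRm
  -- face value estimates
  have hvL : (fun h : ℝ => uL κ x u h - (y + SL h)) =O[nhds 0] fun h : ℝ => h ^ 4 := by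
    refine (face_estimate hu x q 0 1 (-1)).congr_left fun h => ?_
    rw [show x + (0:ℝ)*h = x by ring, show x + (1:ℝ)*h = x + h by ring,
      show x + (-1:ℝ)*h = x - h by ring]
    simp only [uL, hSL, ← hD1, ← hD2, ← hD3, ← hy, hq]; ring
  have hvR : (fun h : ℝ => uR κ x u h - (y + SR h)) =O[nhds 0] fun h : ℝ => h ^ 4 := by
    refine (face_estimate hu x q 1 0 2).congr_left fun h => ?_
    rw [show x + (1:ℝ)*h = x + h by ring, show x + (0:ℝ)*h = x by ring]
    simp only [uR, hSR, ← hD1, ← hD2, ← hD3, ← hy, hq]; ring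
  have hvLm : (fun h : ℝ => uLm κ x u h - (y + SLm h)) =O[nhds 0] fun h : ℝ => h ^ 4 := by
    refine (face_estimate hu x q (-1) 0 (-2)).congr_left fun h => ?_
    rw [show x + (-1:ℝ)*h = x - h by ring, show x + (0:ℝ)*h = x - h + h by ring,
      show x + (-2:ℝ)*h = x - h - h by ring]
    simp only [uLm, uL, hSLm, ← hD1, ← hD2, ← hD3, ← hy, hq]; ring
  have hvRm : (fun h : ℝ => uRm κ x u h - (y + SRm h)) =O[nhds 0] fun h : ℝ => h ^ 4 := by
    refine (face_estimate hu x q 0 (-1) 1).congr_left fun h => ?_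
    rw [show x + (0:ℝ)*h = x - h + h by ring, show x + (-1:ℝ)*h = x - h by ring,
      show x + (1:ℝ)*h = x - h + 2*h by ring]
    simp only [uRm, uR, hSRm, ← hD1, ← hD2, ← hD3, ← hy, hq]; ring
  -- composed estimates
  have hL := comp_step hf hvL (faceS_isO q D1 D2 D3 0 1 (-1))
  have hR := comp_step hf hvR (faceS_isO q D1 D2 D3 1 0 2)
  have hLm := comp_step hf hvLm (faceS_isO q D1 D2 D3 (-1) 0 (-2))
  have hRm := comp_step hf hvRm (faceS_isO q D1 D2 D3 0 (-1) 1)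
  set C : ℝ := (1/24) * (E3 * D1 ^ 3 + 6 * κ * E2 * D1 * D2 + 2 * (3*κ - 1) * E1 * D3) with hC
  set P : (ℝ → ℝ) → ℝ → ℝ := fun S h =>
    f y + E1 * S h + E2 * S h ^ 2 / 2 + E3 * S h ^ 3 / 6 with hP
  have hG : (fun h : ℝ => (f (uL κ x u h) + f (uR κ x u h) - f (uLm κ x u h) - f (uRm κ x u h))
      - (P SL h + P SR h - P SLm h - P SRm h)) =O[nhds 0] fun h : ℝ => h ^ 4 := by
    refine (((hL.add hR).sub hLm).sub hRm).congr_left fun h => ?_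
    simp only [hP]; ring
  -- polynomial remainder
  set Q : ℝ → ℝ := fun h =>
    (-1/48)*h*D1^2*D3*E3 + (-1/24)*h*κ*D2*D3*E2 + (1/16)*h*κ*D1^2*D3*E3
    + (1/8)*h*κ^2*D2*D3*E2 + (1/16)*h*κ^2*D1*D2^2*E3 + (5/288)*h^3*D1*D3^2*E3
    + (-1/24)*h^3*κ*D1*D3^2*E3 + (-1/192)*h^3*κ^2*D2^2*D3*E3 + (1/32)*h^3*κ^2*D1*D3^2*E3
    + (1/64)*h^3*κ^3*D2^2*D3*E3 + (-7/5184)*h^5*D3^3*E3 + (1/144)*h^5*κ*D3^3*E3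
    + (-1/96)*h^5*κ^2*D3^3*E3 + (1/192)*h^5*κ^3*D3^3*E3 with hQ
  have big2 : (fun h : ℝ => (P SL h + P SR h - P SLm h - P SRm h)
      - (2*h*(E1*D1) + 2*C*h^3)) =O[nhds 0] fun h : ℝ => h ^ 4 := by
    have hQc : Continuous Q := by simp only [hQ]; fun_prop
    have h1 : (fun h : ℝ => h ^ 4 * Q h) =O[nhds 0] fun h : ℝ => h ^ 4 := by
      have := (isBigO_refl (fun h : ℝ => h ^ 4) (nhds 0)).mul ((hQc.tendsto 0).isBigO_one ℝ)
      simpa using this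
    refine h1.congr_left fun h => ?_
    simp only [hP, hQ, hSL, hSR, hSLm, hSRm, faceS, Tc, hC, hq]; ring
  have hW : (fun h : ℝ => (f (uL κ x u h) + f (uR κ x u h) - f (uLm κ x u h) - f (uRm κ x u h))
      - (2*h*(E1*D1) + 2*C*h^3)) =O[nhds 0] fun h : ℝ => h ^ 4 := by
    refine (hG.add big2).congr_left fun h => ?_; ring
  -- pass to nhdsWithin and divide by 2h
  have hW' := hW.mono (nhdsWithin_le_nhds (s := Set.Ioi (0:ℝ)))
  have hmul := (isBigO_refl (fun h : ℝ => 1/(2*h)) (nhdsWithin 0 (Set.Ioi 0))).mul hW'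
  have hcube : (fun h : ℝ => 1/(2*h) * h ^ 4) =O[nhdsWithin 0 (Set.Ioi 0)]
      fun h : ℝ => h ^ 3 := by
    rw [isBigO_iff]
    refine ⟨1/2, ?_⟩
    filter_upwards [self_mem_nhdsWithin] with h hh
    have h0 : (h:ℝ) ≠ 0 := ne_of_gt hh
    rw [show 1/(2*h) * h ^ 4 = (1/2) * h^3 by field_simp, norm_mul]
    norm_num
  have main := hmul.trans hcube
  have hderivcomp : deriv (f ∘ u) x = E1 * D1 := by
    rw [hE1, hD1, hy]
    exact deriv_comp x (hf.differentiable (by norm_num)).differentiableAt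
      (hu.differentiable (by norm_num)).differentiableAt
  refine main.congr' ?_ (EventuallyEq.refl _ _)
  filter_upwards [self_mem_nhdsWithin] with h hh
  have h0 : (h:ℝ) ≠ 0 := ne_of_gt hh
  rw [hderivcomp]
  field_simp
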